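/- Let p ≥ 1, J ⊆ I a set of full μ-measure and u, u_0, v : I → [0,∞] measurable such that for every t ∈ J: u_0(t) ≤ u(t), u(t) ≤ v(t) + (∫_{I(t)} k(t,s)^p u_0(s)^p μ(ds))^{1/p}, and lim_{n→∞} ∫_{I(t)} R_{k^p,μ,n}(t,s) u_0(s)^p μ(ds) = 0. Then u(t) ≤ v(t) + Σ_{n=1}^∞ (∫_{I(t)} R_{k^p,μ,n}(t,s) v(s)^p μ(ds))^{1/p} for every t ∈ J. Moreover, if p = 1 and the inequality u(t) ≤ v(t) + ∫_{I(t)} k(t,s) u_0(s) μ(ds) holds with equality and u_0 = u on J, then equality holds in the conclusion. -/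

import Mathlib

open MeasureTheory ENNReal Filter

/-- The resolvent sequence of a non-negative kernel `k` with respect to a measure `μ`:
`res r μ k 0 = k` corresponds to `R_{k,μ,1}` and
`res r μ k (n+1) t s = ∫_{[s,t]} k t u * res r μ k n u s ∂μ` corresponds to `R_{k,μ,n+2}`. -/
noncomputable def res {I : Type*} [MeasurableSpace I] (r : I → I → Prop)
    (μ : Measure I) (k : I → I → ℝ≥0∞) : ℕ → I → I → ℝ≥0∞
  | 0, t, s => k t s
  | n + 1, t, s => ∫⁻ u in {u : I | r s u ∧ r u t}, k t u * res r μ k n u s ∂μ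

section Aux

set_option linter.unusedSectionVars false

lemma lintegral_eq_of_vanish {α : Type*} [MeasurableSpace α] (μ : Measure α) {S : Set α}
    (hS : MeasurableSet S) {f : α → ℝ≥0∞} (hf : ∀ x ∉ S, f x = 0) :
    ∫⁻ x in S, f x ∂μ = ∫⁻ x, f x ∂μ := by
  classical
  rw [← lintegral_indicator hS]
  refine lintegral_congr fun x => ?_
  rw [Set.indicator_apply]
  split_ifs with h
  · rfl
  · exact (hf x h).symm

variable {I : Type*} [MeasurableSpace I] [Preorder I]
  {μ : Measure I} [SigmaFinite μ] {κ : I → I → ℝ≥0∞}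

lemma res_zero {r : I → I → Prop} (t s : I) : res r μ κ 0 t s = κ t s := rfl

lemma measurableSet_le_right (hΔ : MeasurableSet {q : I × I | q.2 ≤ q.1}) (t : I) :
    MeasurableSet {s : I | s ≤ t} :=
  hΔ.preimage (measurable_const.prodMk measurable_id)

lemma measurableSet_interval (hΔ : MeasurableSet {q : I × I | q.2 ≤ q.1}) (s t : I) :
    MeasurableSet {u : I | s ≤ u ∧ u ≤ t} := by
  have h1 : MeasurableSet {u : I | s ≤ u} :=
    hΔ.preimage (measurable_id.prodMk measurable_const)
  exact h1.inter (measurableSet_le_right hΔ t)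

lemma kappa_meas_left (hκm : Measurable fun q : I × I => κ q.1 q.2) (t : I) :
    Measurable (κ t) := hκm.comp (measurable_const.prodMk measurable_id)

lemma kappa_meas_right (hκm : Measurable fun q : I × I => κ q.1 q.2) (s : I) :
    Measurable fun t => κ t s := hκm.comp (measurable_id.prodMk measurable_const)

lemma res_vanish (hκ0 : ∀ t s : I, ¬ s ≤ t → κ t s = 0) :
    ∀ n (t s : I), ¬ s ≤ t → res (· ≤ ·) μ κ n t s = 0
  | 0, t, s, h => hκ0 t s h
  | n + 1, t, s, h => by
    have : {u : I | s ≤ u ∧ u ≤ t} = ∅ := by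
      ext x; simp only [Set.mem_setOf_eq, Set.mem_empty_iff_false, iff_false, not_and]
      exact fun h1 h2 => h (h1.trans h2)
    simp [res, this]

lemma res_succ_full (hΔ : MeasurableSet {q : I × I | q.2 ≤ q.1})
    (hκ0 : ∀ t s : I, ¬ s ≤ t → κ t s = 0) (n : ℕ) (t s : I) :
    res (· ≤ ·) μ κ (n + 1) t s = ∫⁻ u, κ t u * res (· ≤ ·) μ κ n u s ∂μ := by
  show (∫⁻ u in {u : I | s ≤ u ∧ u ≤ t}, κ t u * res (· ≤ ·) μ κ n u s ∂μ) = _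
  refine lintegral_eq_of_vanish μ (measurableSet_interval hΔ s t) fun x hx => ?_
  rw [Set.mem_setOf_eq, not_and_or] at hx
  rcases hx with h | h
  · rw [res_vanish hκ0 n x s h, mul_zero]
  · rw [hκ0 t x h, zero_mul]

lemma res_measurable (hΔ : MeasurableSet {q : I × I | q.2 ≤ q.1})
    (hκm : Measurable fun q : I × I => κ q.1 q.2)
    (hκ0 : ∀ t s : I, ¬ s ≤ t → κ t s = 0) :
    ∀ n : ℕ, Measurable fun q : I × I => res (· ≤ ·) μ κ n q.1 q.2
  | 0 => hκm
  | n + 1 => by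
    have IH := res_measurable hΔ hκm hκ0 n
    have : (fun q : I × I => res (· ≤ ·) μ κ (n + 1) q.1 q.2)
        = fun q : I × I => ∫⁻ u, κ q.1 u * res (· ≤ ·) μ κ n u q.2 ∂μ := by
      funext q; exact res_succ_full hΔ hκ0 n q.1 q.2
    rw [this]
    apply Measurable.lintegral_prod_right'
      (f := fun x : (I × I) × I => κ x.1.1 x.2 * res (· ≤ ·) μ κ n x.2 x.1.2)
    exact (hκm.comp ((measurable_fst.comp measurable_fst).prodMk measurable_snd)).mul
      (IH.comp (measurable_snd.prodMk (measurable_snd.comp measurable_fst)))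

lemma res_meas_left (hΔ : MeasurableSet {q : I × I | q.2 ≤ q.1})
    (hκm : Measurable fun q : I × I => κ q.1 q.2)
    (hκ0 : ∀ t s : I, ¬ s ≤ t → κ t s = 0) (n : ℕ) (t : I) :
    Measurable (res (· ≤ ·) μ κ n t) :=
  (res_measurable hΔ hκm hκ0 n).comp (measurable_const.prodMk measurable_id)

lemma res_meas_right (hΔ : MeasurableSet {q : I × I | q.2 ≤ q.1})
    (hκm : Measurable fun q : I × I => κ q.1 q.2)
    (hκ0 : ∀ t s : I, ¬ s ≤ t → κ t s = 0) (n : ℕ) (s : I) :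
    Measurable fun t => res (· ≤ ·) μ κ n t s :=
  (res_measurable hΔ hκm hκ0 n).comp (measurable_id.prodMk measurable_const)

lemma res_right_rec (hΔ : MeasurableSet {q : I × I | q.2 ≤ q.1})
    (hκm : Measurable fun q : I × I => κ q.1 q.2)
    (hκ0 : ∀ t s : I, ¬ s ≤ t → κ t s = 0)
    {w : I → ℝ≥0∞} (hw : Measurable w) :
    ∀ (n : ℕ) (t : I),
      ∫⁻ s, res (· ≤ ·) μ κ n t s * (∫⁻ r, κ s r * w r ∂μ) ∂μ
        = ∫⁻ r, res (· ≤ ·) μ κ (n + 1) t r * w r ∂μ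
  | 0, t => by
    have h1 : ∀ s : I, res (· ≤ ·) μ κ 0 t s * (∫⁻ r, κ s r * w r ∂μ)
        = ∫⁻ r, κ t s * (κ s r * w r) ∂μ := fun s =>
      (lintegral_const_mul (κ t s) ((hκm.comp (measurable_const.prodMk measurable_id)).mul hw)).symm
    simp_rw [h1]
    rw [lintegral_lintegral_swap]
    · refine lintegral_congr fun r => ?_
      rw [res_succ_full hΔ hκ0 0 t r]
      simp_rw [← mul_assoc, res_zero]
      have hm : Measurable fun x : I => κ t x * κ x r :=
        (kappa_meas_left hκm t).mul (kappa_meas_right hκm r)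
      exact lintegral_mul_const (w r) hm
    · apply Measurable.aemeasurable
      apply Measurable.mul
      · exact hκm.comp ((measurable_const.prodMk measurable_fst))
      · exact (hκm.comp (measurable_fst.prodMk measurable_snd)).mul (hw.comp measurable_snd)
  | n + 1, t => by
    have hG : Measurable fun s => ∫⁻ r, κ s r * w r ∂μ :=
      Measurable.lintegral_prod_right' (f := fun x : I × I => κ x.1 x.2 * w x.2)
        (hκm.mul (hw.comp measurable_snd))
    have hresm := res_measurable (μ := μ) hΔ hκm hκ0
    calc ∫⁻ s, res (· ≤ ·) μ κ (n + 1) t s * (∫⁻ r, κ s r * w r ∂μ) ∂μ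
        = ∫⁻ s, (∫⁻ u, κ t u * res (· ≤ ·) μ κ n u s ∂μ) * (∫⁻ r, κ s r * w r ∂μ) ∂μ := by
          refine lintegral_congr fun s => ?_
          rw [res_succ_full hΔ hκ0 n t s]
      _ = ∫⁻ s, ∫⁻ u, κ t u * res (· ≤ ·) μ κ n u s * (∫⁻ r, κ s r * w r ∂μ) ∂μ ∂μ := by
          refine lintegral_congr fun s => ?_
          have hm : Measurable fun u : I => κ t u * res (· ≤ ·) μ κ n u s :=
            (kappa_meas_left hκm t).mul (res_meas_right hΔ hκm hκ0 n s)
          exact (lintegral_mul_const _ hm).symm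
      _ = ∫⁻ u, ∫⁻ s, κ t u * res (· ≤ ·) μ κ n u s * (∫⁻ r, κ s r * w r ∂μ) ∂μ ∂μ := by
          have hm : Measurable (Function.uncurry
              fun s u => κ t u * res (· ≤ ·) μ κ n u s * (∫⁻ r, κ s r * w r ∂μ)) := by
            refine Measurable.mul (Measurable.mul ?_ ?_) ?_
            · exact (kappa_meas_left hκm t).comp measurable_snd
            · exact (hresm n).comp (measurable_snd.prodMk measurable_fst)
            · exact hG.comp measurable_fst
          exact lintegral_lintegral_swap (μ := μ) (ν := μ)
            (f := fun s u => κ t u * res (· ≤ ·) μ κ n u s * (∫⁻ r, κ s r * w r ∂μ))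
            hm.aemeasurable
      _ = ∫⁻ u, κ t u * ∫⁻ s, res (· ≤ ·) μ κ n u s * (∫⁻ r, κ s r * w r ∂μ) ∂μ ∂μ := by
          refine lintegral_congr fun u => ?_
          simp_rw [mul_assoc]
          exact lintegral_const_mul (κ t u)
            ((res_meas_left hΔ hκm hκ0 n u).mul hG)
      _ = ∫⁻ u, κ t u * ∫⁻ r, res (· ≤ ·) μ κ (n + 1) u r * w r ∂μ ∂μ := by
          refine lintegral_congr fun u => ?_
          rw [res_right_rec hΔ hκm hκ0 hw n u]
      _ = ∫⁻ u, ∫⁻ r, κ t u * (res (· ≤ ·) μ κ (n + 1) u r * w r) ∂μ ∂μ := by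
          refine lintegral_congr fun u => ?_
          exact (lintegral_const_mul (κ t u)
            ((res_meas_left hΔ hκm hκ0 (n + 1) u).mul hw)).symm
      _ = ∫⁻ r, ∫⁻ u, κ t u * (res (· ≤ ·) μ κ (n + 1) u r * w r) ∂μ ∂μ := by
          have hm : Measurable (Function.uncurry
              fun u r => κ t u * (res (· ≤ ·) μ κ (n + 1) u r * w r)) := by
            refine Measurable.mul ?_ (Measurable.mul ?_ ?_)
            · exact (kappa_meas_left hκm t).comp measurable_fst
            · exact (hresm (n + 1)).comp (measurable_fst.prodMk measurable_snd)
            · exact hw.comp measurable_snd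
          exact lintegral_lintegral_swap (μ := μ) (ν := μ)
            (f := fun u r => κ t u * (res (· ≤ ·) μ κ (n + 1) u r * w r))
            hm.aemeasurable
      _ = ∫⁻ r, res (· ≤ ·) μ κ (n + 2) t r * w r ∂μ := by
          refine lintegral_congr fun r => ?_
          rw [res_succ_full hΔ hκ0 (n + 1) t r]
          simp_rw [← mul_assoc]
          exact lintegral_mul_const (w r)
            ((kappa_meas_left hκm t).mul (res_meas_right hΔ hκm hκ0 (n + 1) r))

end Aux


/-- **Resolvent inequality** (Corollary 1 of the paper): if `J` has full measure,
`u₀ ≤ u` on `J`, `u t ≤ v t + (∫_{I(t)} k(t,s)^p u₀(s)^p μ(ds))^{1/p}` on `J` and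
`∫_{I(t)} R_{k^p,μ,n}(t,s) u₀(s)^p μ(ds) → 0` for every `t ∈ J`, then
`u t ≤ v t + ∑_{n=1}^∞ (∫_{I(t)} R_{k^p,μ,n}(t,s) v(s)^p μ(ds))^{1/p}` on `J`;
moreover equality holds if `p = 1`, the assumed inequality is an identity and `u₀ = u`
on `J` (the summation index is shifted by one: `res … n = R_{·,n+1}`). -/
theorem resolvent_inequality {I : Type*} [MeasurableSpace I] [Preorder I]
    (hΔ : MeasurableSet {q : I × I | q.2 ≤ q.1})
    (μ : Measure I) [SigmaFinite μ]
    (k : I → I → ℝ≥0∞)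
    (hk : Measurable fun q : {q : I × I // q.2 ≤ q.1} => k q.1.1 q.1.2)
    (p : ℝ) (hp : 1 ≤ p)
    (J : Set I) (hJ : μ Jᶜ = 0)
    (u u₀ v : I → ℝ≥0∞) (hu : Measurable u) (hu₀ : Measurable u₀) (hv : Measurable v)
    (hle : ∀ t ∈ J, u₀ t ≤ u t)
    (hineq : ∀ t ∈ J,
      u t ≤ v t + (∫⁻ s in {s : I | s ≤ t}, k t s ^ p * u₀ s ^ p ∂μ) ^ (1 / p))
    (hlim : ∀ t ∈ J,
      Tendsto (fun n : ℕ =>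
          ∫⁻ s in {s : I | s ≤ t}, res (· ≤ ·) μ (fun a b => k a b ^ p) n t s * u₀ s ^ p ∂μ)
        atTop (nhds 0)) :
    (∀ t ∈ J,
      u t ≤ v t + ∑' n : ℕ,
        (∫⁻ s in {s : I | s ≤ t},
          res (· ≤ ·) μ (fun a b => k a b ^ p) n t s * v s ^ p ∂μ) ^ (1 / p)) ∧
    (p = 1 →
      (∀ t ∈ J, u t = v t + ∫⁻ s in {s : I | s ≤ t}, k t s * u₀ s ∂μ) →
      (∀ t ∈ J, u₀ t = u t) →
      ∀ t ∈ J,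
        u t = v t + ∑' n : ℕ,
          (∫⁻ s in {s : I | s ≤ t},
            res (· ≤ ·) μ (fun a b => k a b ^ p) n t s * v s ^ p ∂μ) ^ (1 / p)) := by
  have hp0 : (0 : ℝ) < p := lt_of_lt_of_le zero_lt_one hp
  -- the measurable extension of `k ^ p` by zero
  obtain ⟨κ, hκm, hκeq, hκ0⟩ :
      ∃ κ : I → I → ℝ≥0∞, (Measurable fun q : I × I => κ q.1 q.2) ∧
        (∀ t s : I, s ≤ t → κ t s = k t s ^ p) ∧ (∀ t s : I, ¬ s ≤ t → κ t s = 0) := by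
    refine ⟨fun t s => Function.extend (Subtype.val : {q : I × I // q.2 ≤ q.1} → I × I)
      (fun q => k q.1.1 q.1.2 ^ p) (fun _ => 0) (t, s), ?_, ?_, ?_⟩
    · exact ((MeasurableEmbedding.subtype_coe hΔ).measurable_extend
        ((ENNReal.continuous_rpow_const.measurable).comp hk) measurable_const).comp
        (measurable_fst.prodMk measurable_snd)
    · intro t s h
      exact Subtype.val_injective.extend_apply
        (fun q : {q : I × I // q.2 ≤ q.1} => k q.1.1 q.1.2 ^ p) (fun _ => 0)
        (⟨(t, s), h⟩ : {q : I × I // q.2 ≤ q.1})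
    · intro t s h
      show Function.extend (Subtype.val : {q : I × I // q.2 ≤ q.1} → I × I)
        (fun q => k q.1.1 q.1.2 ^ p) (fun _ => 0) (t, s) = 0
      rw [Function.extend_apply']
      rintro ⟨a, ha⟩
      have := a.2
      rw [ha] at this
      exact h this
  -- equality of the two resolvent kernels on the triangle
  have hres_eq : ∀ (n : ℕ) (t s : I), s ≤ t →
      res (· ≤ ·) μ (fun a b => k a b ^ p) n t s = res (· ≤ ·) μ κ n t s := by
    intro n
    induction n with
    | zero => intro t s h; simp only [res_zero]; exact (hκeq t s h).symm
    | succ n ih =>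
      intro t s h
      show (∫⁻ x in {x : I | s ≤ x ∧ x ≤ t},
          k t x ^ p * res (· ≤ ·) μ (fun a b => k a b ^ p) n x s ∂μ)
        = ∫⁻ x in {x : I | s ≤ x ∧ x ≤ t}, κ t x * res (· ≤ ·) μ κ n x s ∂μ
      refine setLIntegral_congr_fun (measurableSet_interval hΔ s t) (fun x hx => ?_)
      rw [hκeq t x hx.2, ih x s hx.1]
  have hresm := res_measurable (μ := μ) hΔ hκm hκ0
  -- conversion of truncated integrals into full-space integrals
  have hconv : ∀ (w : I → ℝ≥0∞) (n : ℕ) (t : I),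
      (∫⁻ s in {s : I | s ≤ t}, res (· ≤ ·) μ (fun a b => k a b ^ p) n t s * w s ∂μ)
        = ∫⁻ s, res (· ≤ ·) μ κ n t s * w s ∂μ := by
    intro w n t
    rw [setLIntegral_congr_fun (measurableSet_le_right hΔ t)
      (fun s hs => by rw [hres_eq n t s hs])]
    exact lintegral_eq_of_vanish μ (measurableSet_le_right hΔ t)
      fun s hs => by rw [res_vanish hκ0 n t s hs, zero_mul]
  have hu₀p : Measurable fun s => u₀ s ^ p :=
    (ENNReal.continuous_rpow_const.measurable).comp hu₀
  have hvp : Measurable fun s => v s ^ p :=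
    (ENNReal.continuous_rpow_const.measurable).comp hv
  -- `U n t` and `V n t`
  obtain ⟨U, hU⟩ : ∃ U : ℕ → I → ℝ≥0∞, ∀ n t,
      U n t = ∫⁻ s, res (· ≤ ·) μ κ n t s * u₀ s ^ p ∂μ := ⟨_, fun n t => rfl⟩
  obtain ⟨V, hV⟩ : ∃ V : ℕ → I → ℝ≥0∞, ∀ n t,
      V n t = ∫⁻ s, res (· ≤ ·) μ κ n t s * v s ^ p ∂μ := ⟨_, fun n t => rfl⟩
  have hU0m : Measurable (U 0) := by
    have : U 0 = fun t => ∫⁻ s, res (· ≤ ·) μ κ 0 t s * u₀ s ^ p ∂μ := funext fun t => hU 0 t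
    rw [this]
    exact Measurable.lintegral_prod_right'
      (f := fun x : I × I => res (· ≤ ·) μ κ 0 x.1 x.2 * u₀ x.2 ^ p)
      ((hresm 0).mul (hu₀p.comp measurable_snd))
  -- base inequality
  have hbase : ∀ t ∈ J, u t ≤ v t + (U 0 t) ^ (1 / p) := by
    intro t ht
    have h2 : (∫⁻ s in {s : I | s ≤ t}, k t s ^ p * u₀ s ^ p ∂μ) = U 0 t := by
      rw [hU 0 t]
      exact hconv (fun s => u₀ s ^ p) 0 t
    have := hineq t ht
    rwa [h2] at this
  have hJae : ∀ᵐ s ∂μ, s ∈ J := by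
    rw [ae_iff]
    exact hJ
  have hae : ∀ᵐ s ∂μ, u₀ s ≤ v s + (U 0 s) ^ (1 / p) :=
    hJae.mono fun s hs => (hle s hs).trans (hbase s hs)
  -- recursion step for U
  have hstep : ∀ (N : ℕ) (t : I),
      (U N t) ^ (1 / p) ≤ (V N t) ^ (1 / p) + (U (N + 1) t) ^ (1 / p) := by
    intro N t
    have hresmN : Measurable (res (· ≤ ·) μ κ N t) := res_meas_left hΔ hκm hκ0 N t
    have hg2 : Measurable fun s => (U 0 s) ^ (1 / p) :=
      (ENNReal.continuous_rpow_const.measurable).comp hU0m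
    have hsum : Measurable fun s => (v s + (U 0 s) ^ (1 / p)) ^ p :=
      (ENNReal.continuous_rpow_const.measurable).comp (hv.add hg2)
    have key1 : U N t ≤ ∫⁻ s, (v s + (U 0 s) ^ (1 / p)) ^ p
        ∂(μ.withDensity (res (· ≤ ·) μ κ N t)) := by
      rw [lintegral_withDensity_eq_lintegral_mul μ hresmN hsum, hU N t]
      refine lintegral_mono_ae (hae.mono fun s hs => ?_)
      exact mul_le_mul_right (ENNReal.rpow_le_rpow hs hp0.le) _
    calc (U N t) ^ (1 / p)
        ≤ (∫⁻ s, (v s + (U 0 s) ^ (1 / p)) ^ p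
            ∂(μ.withDensity (res (· ≤ ·) μ κ N t))) ^ (1 / p) :=
          ENNReal.rpow_le_rpow key1 (by positivity)
      _ ≤ (∫⁻ s, v s ^ p ∂(μ.withDensity (res (· ≤ ·) μ κ N t))) ^ (1 / p)
          + (∫⁻ s, ((U 0 s) ^ (1 / p)) ^ p ∂(μ.withDensity (res (· ≤ ·) μ κ N t))) ^ (1 / p) :=
          ENNReal.lintegral_Lp_add_le hv.aemeasurable hg2.aemeasurable hp
      _ = (V N t) ^ (1 / p) + (U (N + 1) t) ^ (1 / p) := by
          congr 1
          · rw [lintegral_withDensity_eq_lintegral_mul μ hresmN hvp, hV N t]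
            rfl
          · congr 1
            have hcancel : ∀ x : ℝ≥0∞, (x ^ (1 / p)) ^ p = x := by
              intro x
              rw [← ENNReal.rpow_mul, one_div_mul_cancel hp0.ne', ENNReal.rpow_one]
            simp_rw [hcancel]
            rw [lintegral_withDensity_eq_lintegral_mul μ hresmN hU0m, hU (N + 1) t]
            have : ∀ s, (res (· ≤ ·) μ κ N t * U 0) s
                = res (· ≤ ·) μ κ N t s * (∫⁻ r, κ s r * u₀ r ^ p ∂μ) := by
              intro s
              show res (· ≤ ·) μ κ N t s * U 0 s = _
              rw [hU 0 s]
              rfl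
            rw [lintegral_congr this]
            exact res_right_rec hΔ hκm hκ0 hu₀p N t
  -- the iterated inequality
  have key : ∀ N : ℕ, ∀ t ∈ J,
      u t ≤ v t + ∑ n ∈ Finset.range N, (V n t) ^ (1 / p) + (U N t) ^ (1 / p) := by
    intro N
    induction N with
    | zero => intro t ht; simpa using hbase t ht
    | succ N ih =>
      intro t ht
      calc u t ≤ v t + ∑ n ∈ Finset.range N, (V n t) ^ (1 / p) + (U N t) ^ (1 / p) := ih t ht
        _ ≤ v t + ∑ n ∈ Finset.range N, (V n t) ^ (1 / p)
            + ((V N t) ^ (1 / p) + (U (N + 1) t) ^ (1 / p)) := add_le_add_right (hstep N t) _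
        _ = v t + ∑ n ∈ Finset.range (N + 1), (V n t) ^ (1 / p) + (U (N + 1) t) ^ (1 / p) := by
            rw [Finset.sum_range_succ]; ring
  -- the limit of the remainder
  have hUlim : ∀ t ∈ J, Tendsto (fun N => U N t) atTop (nhds 0) := by
    intro t ht
    have h1 := hlim t ht
    have h2 : (fun n : ℕ => ∫⁻ s in {s : I | s ≤ t},
        res (· ≤ ·) μ (fun a b => k a b ^ p) n t s * u₀ s ^ p ∂μ) = fun n => U n t := by
      funext n
      rw [hU n t]
      exact hconv (fun s => u₀ s ^ p) n t
    rwa [h2] at h1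
  have hUpowlim : ∀ t ∈ J, Tendsto (fun N => (U N t) ^ (1 / p)) atTop (nhds 0) := by
    intro t ht
    have := (ENNReal.continuous_rpow_const (y := 1 / p)).tendsto 0 |>.comp (hUlim t ht)
    rwa [ENNReal.zero_rpow_of_pos (by positivity)] at this
  constructor
  · -- the inequality
    intro t ht
    have hTsum : Tendsto (fun N => v t + ∑ n ∈ Finset.range N, (V n t) ^ (1 / p)
        + (U N t) ^ (1 / p)) atTop (nhds (v t + ∑' n, (V n t) ^ (1 / p) + 0)) :=
      (tendsto_const_nhds.add (ENNReal.tendsto_nat_tsum _)).add (hUpowlim t ht)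
    rw [add_zero] at hTsum
    have hgoal : u t ≤ v t + ∑' n, (V n t) ^ (1 / p) :=
      ge_of_tendsto' hTsum fun N => key N t ht
    have hzz : (∑' n, ((∫⁻ s in {s : I | s ≤ t},
        res (· ≤ ·) μ (fun a b => k a b ^ p) n t s * v s ^ p ∂μ)) ^ (1 / p))
        = ∑' n, (V n t) ^ (1 / p) := by
      refine tsum_congr fun n => ?_
      rw [hconv (fun s => v s ^ p) n t, ← hV n t]
    rw [hzz]
    exact hgoal
  · -- the equality for `p = 1`
    intro hp1 heqn hu₀u
    subst hp1
    have hGconv : ∀ s : I, (∫⁻ r in {r : I | r ≤ s}, k s r * u₀ r ∂μ)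
        = ∫⁻ r, res (· ≤ ·) μ κ 0 s r * u₀ r ^ (1 : ℝ) ∂μ := by
      intro s
      rw [← hconv (fun r => u₀ r ^ (1 : ℝ)) 0 s]
      refine setLIntegral_congr_fun (measurableSet_le_right hΔ s) (fun r hr => ?_)
      simp only [res_zero, ENNReal.rpow_one]
    have hUstep : ∀ (N : ℕ) (t : I), U N t = V N t + U (N + 1) t := by
      intro N t
      have hsae : ∀ᵐ s ∂μ, res (· ≤ ·) μ κ N t s * u₀ s ^ (1 : ℝ)
          = res (· ≤ ·) μ κ N t s * (v s ^ (1 : ℝ)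
            + ∫⁻ r, res (· ≤ ·) μ κ 0 s r * u₀ r ^ (1 : ℝ) ∂μ) := by
        refine hJae.mono fun s hs => ?_
        rw [ENNReal.rpow_one, ENNReal.rpow_one, ← hGconv s, hu₀u s hs, heqn s hs]
      calc U N t = ∫⁻ s, res (· ≤ ·) μ κ N t s * (v s ^ (1 : ℝ)
            + ∫⁻ r, res (· ≤ ·) μ κ 0 s r * u₀ r ^ (1 : ℝ) ∂μ) ∂μ := by
            rw [hU N t]; exact lintegral_congr_ae hsae
        _ = ∫⁻ s, (res (· ≤ ·) μ κ N t s * v s ^ (1 : ℝ)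
            + res (· ≤ ·) μ κ N t s * ∫⁻ r, κ s r * u₀ r ^ (1 : ℝ) ∂μ) ∂μ := by
            refine lintegral_congr fun s => ?_
            rw [mul_add]
            rfl
        _ = V N t + U (N + 1) t := by
            rw [lintegral_add_left (f := fun s => res (· ≤ ·) μ κ N t s * v s ^ (1 : ℝ)) ((res_meas_left hΔ hκm hκ0 N t).mul hvp), hV N t, hU (N + 1) t]
            congr 1
            exact res_right_rec hΔ hκm hκ0 hu₀p N t
    intro t ht
    have keyE : ∀ N : ℕ, u t = v t + ∑ n ∈ Finset.range N, V n t + U N t := by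
      intro N
      induction N with
      | zero =>
        have h2 : (∫⁻ s in {s : I | s ≤ t}, k t s * u₀ s ∂μ) = U 0 t := by
          rw [hU 0 t, ← hGconv t]
        simpa [h2] using heqn t ht
      | succ N ih =>
        rw [ih, hUstep N t, Finset.sum_range_succ]
        ring
    have hTsum : Tendsto (fun N => v t + ∑ n ∈ Finset.range N, V n t + U N t)
        atTop (nhds (v t + ∑' n, V n t + 0)) :=
      (tendsto_const_nhds.add (ENNReal.tendsto_nat_tsum _)).add (hUlim t ht)
    rw [add_zero] at hTsum
    have huv : u t = v t + ∑' n, V n t :=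
      tendsto_nhds_unique ((tendsto_const_nhds (x := u t)).congr fun N => keyE N) hTsum
    rw [huv]
    congr 1
    refine tsum_congr fun n => ?_
    rw [hconv (fun s => v s ^ (1 : ℝ)) n t, ← hV n t]
    norm_num
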